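/- For every integer k ≥ 2 and every x ∈ [-1,1], ∫_{-1}^{1} P_k(t)·|t - x| dt = 2 p_k(x), where p_k(t) = (1/(2^k k!)) d^{k-2}/dt^{k-2} (t^2 - 1)^k. -/

import Mathlib

open Polynomial intervalIntegral

lemma iteratedDeriv_eval' (p : ℝ[X]) (n : ℕ) :
    iteratedDeriv n (fun x => p.eval x) = fun x => (derivative^[n] p).eval x := by
  induction n generalizing p with
  | zero => simp
  | succ n ih =>
    rw [iteratedDeriv_succ',
      show (deriv fun x => eval x p) = fun x => eval x (derivative p) from
        funext fun _ => Polynomial.deriv _, ih, Function.iterate_succ_apply]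

lemma vanish (k j : ℕ) (hj : j < k) (a : ℝ) (ha : a ^ 2 = 1) :
    (derivative^[j] (((X : ℝ[X]) ^ 2 - C 1) ^ k)).eval a = 0 := by
  have hmon : ((X : ℝ[X]) ^ 2 - C 1).Monic := monic_X_pow_sub_C 1 (by norm_num)
  have hne : (((X : ℝ[X]) ^ 2 - C 1) ^ k) ≠ 0 := (hmon.pow k).ne_zero
  have hdvd : (X - C a) ^ k ∣ ((X : ℝ[X]) ^ 2 - C 1) ^ k := by
    apply pow_dvd_pow_of_dvd
    rw [dvd_iff_isRoot]
    simp [IsRoot, ha]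
  have hmul : k ≤ rootMultiplicity a (((X : ℝ[X]) ^ 2 - C 1) ^ k) :=
    (le_rootMultiplicity_iff hne).2 hdvd
  exact isRoot_iterate_derivative_of_lt_rootMultiplicity (lt_of_lt_of_le hj hmul)

lemma part1 (g : ℝ[X]) (a b : ℝ) :
    (∫ t in a..b, (derivative (derivative g)).eval t * (b - t)) =
      g.eval b - ((derivative g).eval a * (b - a) + g.eval a) := by
  have h : ∀ t ∈ Set.uIcc a b,
      HasDerivAt (fun t => (derivative g).eval t * (b - t) + g.eval t)
        ((derivative (derivative g)).eval t * (b - t)) t := by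
    intro t _
    have h1 := ((derivative g).hasDerivAt t).mul ((hasDerivAt_id t).const_sub b)
    have h2 := (g.hasDerivAt t)
    refine (h1.add h2).congr_deriv ?_
    simp
  have hint : IntervalIntegrable (fun t => (derivative (derivative g)).eval t * (b - t))
      MeasureTheory.volume a b :=
    (((derivative (derivative g)).continuous).mul
      (continuous_const.sub continuous_id)).intervalIntegrable a b
  rw [integral_eq_sub_of_hasDerivAt h hint]
  simp

lemma part2 (g : ℝ[X]) (a b : ℝ) :
    (∫ t in a..b, (derivative (derivative g)).eval t * (t - a)) =
      ((derivative g).eval b * (b - a) - g.eval b) + g.eval a := by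
  have h : ∀ t ∈ Set.uIcc a b,
      HasDerivAt (fun t => (derivative g).eval t * (t - a) - g.eval t)
        ((derivative (derivative g)).eval t * (t - a)) t := by
    intro t _
    have h1 := ((derivative g).hasDerivAt t).mul ((hasDerivAt_id t).sub_const a)
    have h2 := (g.hasDerivAt t)
    refine (h1.sub h2).congr_deriv ?_
    simp
  have hint : IntervalIntegrable (fun t => (derivative (derivative g)).eval t * (t - a))
      MeasureTheory.volume a b :=
    (((derivative (derivative g)).continuous).mul
      (continuous_id.sub continuous_const)).intervalIntegrable a b
  rw [integral_eq_sub_of_hasDerivAt h hint]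
  simp

/-- The classical Legendre polynomials via Rodrigues' formula. -/
noncomputable def legendreP (k : ℕ) : ℝ → ℝ :=
  fun t => (1 / (2 ^ k * (Nat.factorial k : ℝ))) *
    iteratedDeriv k (fun s : ℝ => (s ^ 2 - 1) ^ k) t

/-- `p_k(t) = (1/(2^k k!)) d^{k-2}/dt^{k-2} (t²-1)^k`. -/
noncomputable def legendrep (k : ℕ) : ℝ → ℝ :=
  fun t => (1 / (2 ^ k * (Nat.factorial k : ℝ))) *
    iteratedDeriv (k - 2) (fun s : ℝ => (s ^ 2 - 1) ^ k) t

theorem legendre_abs_integral (k : ℕ) (hk : 2 ≤ k) (x : ℝ)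
    (hx : x ∈ Set.Icc (-1:ℝ) 1) :
    (∫ t in (-1:ℝ)..1, legendreP k t * |t - x|) = 2 * legendrep k x := by
  obtain ⟨hx1, hx2⟩ := hx
  set q : ℝ[X] := ((X : ℝ[X]) ^ 2 - C 1) ^ k with hq
  have hfun : (fun s : ℝ => (s ^ 2 - 1) ^ k) = fun s => q.eval s := by
    funext s; simp [hq]
  set f : ℝ[X] := derivative^[k - 2] q with hf
  have hd1 : derivative^[k - 1] q = derivative f := by
    conv_lhs => rw [show k - 1 = (k - 2) + 1 from by omega, Function.iterate_succ_apply']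
  have hd2 : derivative^[k] q = derivative (derivative f) := by
    conv_lhs => rw [show k = (k - 2) + 1 + 1 from by omega, Function.iterate_succ_apply',
      Function.iterate_succ_apply']
  set c : ℝ := 1 / (2 ^ k * (Nat.factorial k : ℝ)) with hc
  have hP : ∀ t, legendreP k t = c * (derivative (derivative f)).eval t := by
    intro t
    rw [legendreP, hfun, iteratedDeriv_eval', hd2]
  have hp : ∀ t, legendrep k t = c * f.eval t := by
    intro t
    rw [legendrep, hfun, iteratedDeriv_eval', hf]
  -- boundary values vanish
  have hone : (1 : ℝ) ^ 2 = 1 := by norm_num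
  have hneg : (-1 : ℝ) ^ 2 = 1 := by norm_num
  have hf1 : f.eval 1 = 0 := vanish k (k - 2) (by omega) 1 hone
  have hfn : f.eval (-1) = 0 := vanish k (k - 2) (by omega) (-1) hneg
  have hf'1 : (derivative f).eval 1 = 0 := by
    rw [← hd1]; exact vanish k (k - 1) (by omega) 1 hone
  have hf'n : (derivative f).eval (-1) = 0 := by
    rw [← hd1]; exact vanish k (k - 1) (by omega) (-1) hneg
  have habs : Continuous fun t : ℝ => |t - x| :=
    (continuous_id.sub continuous_const).abs
  have hcont : Continuous fun t : ℝ => (derivative (derivative f)).eval t * |t - x| :=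
    ((derivative (derivative f)).continuous).mul habs
  calc (∫ t in (-1:ℝ)..1, legendreP k t * |t - x|)
      = c * ∫ t in (-1:ℝ)..1, (derivative (derivative f)).eval t * |t - x| := by
        rw [← integral_const_mul]
        congr 1; funext t; rw [hP t]; ring
    _ = c * ((∫ t in (-1:ℝ)..x, (derivative (derivative f)).eval t * |t - x|) +
        ∫ t in x..(1:ℝ), (derivative (derivative f)).eval t * |t - x|) := by
        rw [integral_add_adjacent_intervals (hcont.intervalIntegrable _ _)
          (hcont.intervalIntegrable _ _)]
    _ = c * ((∫ t in (-1:ℝ)..x, (derivative (derivative f)).eval t * (x - t)) +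
        ∫ t in x..(1:ℝ), (derivative (derivative f)).eval t * (t - x)) := by
        congr 2
        · apply integral_congr
          intro t ht
          rw [Set.uIcc_of_le hx1, Set.mem_Icc] at ht
          dsimp only
          rw [abs_of_nonpos (by linarith [ht.2])]
          ring
        · apply integral_congr
          intro t ht
          rw [Set.uIcc_of_le hx2, Set.mem_Icc] at ht
          dsimp only
          rw [abs_of_nonneg (by linarith [ht.1])]
    _ = 2 * legendrep k x := by
        rw [part1 f (-1) x, part2 f x 1, hf1, hfn, hf'1, hf'n, hp x]
        ring
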